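/- Let E be a real inner product space and let h : E → ℝ be a convex differentiable function. Suppose α ∈ (0, 1] satisfies α·D_h(x, y) ≤ D_h(y, x) for all x, y ∈ E (a positive lower bound on the symmetry coefficient of h). Then for every κ > 0 there exists γ* > 0 such that for all γ ∈ [0, γ*] and all x₁, x₂ ∈ E, setting y := x₁ + γ(x₁ − x₂), one has D_h(x₁, y) ≤ κ·D_h(x₂, x₁). (General Extrapolation Behavior.) -/

import Mathlib

open RealInnerProductSpace

/-- Nonnegativity of the Bregman distance of a convex differentiable function. -/
lemma bregman_nonneg_aux
    {E : Type*} [NormedAddCommGroup E] [InnerProductSpace ℝ E]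
    (h : E → ℝ) (h' : E → E)
    (hconv : ConvexOn ℝ Set.univ h)
    (hdiff : ∀ x, HasFDerivAt h (innerSL ℝ (h' x)) x) (x y : E) :
    0 ≤ h x - h y - ⟪h' y, x - y⟫ := by
  set g : ℝ → ℝ := fun t => h (y + t • (x - y)) with hg
  have hgconv : ConvexOn ℝ Set.univ g := by
    refine ⟨convex_univ, ?_⟩
    intro a _ b _ μ ν hμ hν hμν
    have hν' : ν = 1 - μ := by linarith
    subst hν'
    have key : y + (μ * a + (1 - μ) * b) • (x - y)
        = μ • (y + a • (x - y)) + (1 - μ) • (y + b • (x - y)) := by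
      match_scalars <;> ring
    simp only [hg, smul_eq_mul, key]
    exact hconv.2 (Set.mem_univ _) (Set.mem_univ _) hμ hν hμν
  have hc : HasDerivAt (fun s : ℝ => y + s • (x - y)) (x - y) 0 := by
    simpa using ((hasDerivAt_id (0 : ℝ)).smul_const (x - y)).const_add y
  have hg' : HasDerivAt g ⟪h' y, x - y⟫ 0 := by
    have h0 : y + (0 : ℝ) • (x - y) = y := by simp
    have := (hdiff (y + (0 : ℝ) • (x - y))).comp_hasDerivAt 0 hc
    simp only [h0] at this; exact this
  have hs := hgconv.le_slope_of_hasDerivAt (Set.mem_univ (0 : ℝ)) (Set.mem_univ (1 : ℝ))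
    one_pos hg'
  have hg1 : g 1 = h x := by
    simp only [hg, one_smul]
    congr 1
    abel
  have hg0 : g 0 = h y := by simp [hg]
  rw [slope_def_field] at hs
  rw [hg1, hg0] at hs
  have : ⟪h' y, x - y⟫ ≤ h x - h y := by
    have := hs
    field_simp at this
    linarith
  linarith

/-- Scalar core of the extrapolation argument. -/
lemma extrapolation_scalar (α γ κ a1 a2 ay p q r : ℝ)
    (hα0 : 0 < α)
    (hγ0 : 0 ≤ γ) (hγα : γ ≤ α) (hγκ : γ ≤ κ * α ^ 2)
    (h3 : 0 ≤ a2 - a1 + p)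
    (h5 : α * (a1 - ay + γ * r) ≤ ay - a1 - γ * p)
    (h6 : α * (a1 - a2 - q) ≤ a2 - a1 + p)
    (h7 : α * (a2 - ay + (1 + γ) * r) ≤ ay - a2 - (1 + γ) * q) :
    a1 - ay + γ * r ≤ κ * (a2 - a1 + p) := by
  have hpos : (0 : ℝ) < α ^ 2 * (1 + α) := by positivity
  have main : α ^ 2 * (1 + α) * (a1 - ay + γ * r)
      ≤ α ^ 2 * (1 + α) * (κ * (a2 - a1 + p)) := by
    nlinarith [mul_nonneg (mul_nonneg hα0.le hγ0) (sub_nonneg.2 h7),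
      mul_nonneg (mul_nonneg hα0.le (sub_nonneg.2 hγα)) (sub_nonneg.2 h5),
      mul_nonneg (by positivity : (0:ℝ) ≤ γ + γ ^ 2) (sub_nonneg.2 h6),
      mul_nonneg (mul_nonneg (by linarith : (0:ℝ) ≤ 1 + α) (sub_nonneg.2 hγκ)) h3,
      mul_nonneg (mul_nonneg (mul_nonneg (by linarith : (0:ℝ) ≤ 1 + α) hγ0)
        (sub_nonneg.2 hγα)) h3]
  exact le_of_mul_le_mul_left main hpos

/-- General Extrapolation Behavior: let `h : E → ℝ` be convex and differentiable with
gradient `h'`, and suppose `α ∈ (0, 1]` is a lower bound on the symmetry coefficient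
of `h`, i.e. `α * D_h(x, y) ≤ D_h(y, x)` for all `x, y`, where
`D_h(x, y) = h x - h y - ⟪h' y, x - y⟫` is the Bregman distance. Then for every
`κ > 0` there exists `γ* > 0` such that for all `γ ∈ [0, γ*]` and all `x₁, x₂ ∈ E`,
setting `y = x₁ + γ • (x₁ - x₂)`, one has `D_h(x₁, y) ≤ κ * D_h(x₂, x₁)`. -/
theorem general_extrapolation_behavior
    {E : Type*} [NormedAddCommGroup E] [InnerProductSpace ℝ E]
    (h : E → ℝ) (h' : E → E)
    (hconv : ConvexOn ℝ Set.univ h)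
    (hdiff : ∀ x, HasFDerivAt h (innerSL ℝ (h' x)) x)
    (α : ℝ) (hα0 : 0 < α) (hα1 : α ≤ 1)
    (hsym : ∀ x y : E,
      α * (h x - h y - ⟪h' y, x - y⟫) ≤ h y - h x - ⟪h' x, y - x⟫) :
    ∀ κ : ℝ, 0 < κ → ∃ γstar : ℝ, 0 < γstar ∧
      ∀ γ : ℝ, γ ∈ Set.Icc (0 : ℝ) γstar → ∀ x₁ x₂ : E,
        h x₁ - h (x₁ + γ • (x₁ - x₂)) -
            ⟪h' (x₁ + γ • (x₁ - x₂)), x₁ - (x₁ + γ • (x₁ - x₂))⟫ ≤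
          κ * (h x₂ - h x₁ - ⟪h' x₁, x₂ - x₁⟫) := by
  intro κ hκ
  refine ⟨min α (κ * α ^ 2), lt_min hα0 (by positivity), ?_⟩
  rintro γ ⟨hγ0, hγs⟩ x₁ x₂
  have hγα : γ ≤ α := hγs.trans (min_le_left _ _)
  have hγκ : γ ≤ κ * α ^ 2 := hγs.trans (min_le_right _ _)
  set y : E := x₁ + γ • (x₁ - x₂) with hy
  have e1 : x₁ - y = -(γ • (x₁ - x₂)) := by rw [hy]; abel
  have e2 : y - x₁ = γ • (x₁ - x₂) := by rw [hy]; abel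
  have e3 : x₂ - y = -((1 + γ) • (x₁ - x₂)) := by rw [hy]; module
  have e4 : x₂ - x₁ = -(x₁ - x₂) := by abel
  have e5 : y - x₂ = (1 + γ) • (x₁ - x₂) := by rw [hy]; module
  have H5 := hsym x₁ y
  have H6 := hsym x₁ x₂
  have H7 := hsym x₂ y
  have H3 := bregman_nonneg_aux h h' hconv hdiff x₂ x₁
  rw [e1, e2] at H5
  rw [e4] at H6 H3
  rw [e3, e5] at H7
  rw [e1, e4]
  simp only [inner_neg_right, real_inner_smul_right] at H5 H6 H7 H3 ⊢
  have goal := extrapolation_scalar α γ κ (h x₁) (h x₂) (h y)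
    ⟪h' x₁, x₁ - x₂⟫ ⟪h' x₂, x₁ - x₂⟫ ⟪h' y, x₁ - x₂⟫
    hα0 hγ0 hγα hγκ (by linarith) (by linarith) (by linarith) (by linarith)
  linarith
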